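/- Let $\zeta\in\mathbb{R}^2$, $r\ge0$, $\vartheta\in[-\pi/2,\pi/2]$ with $(\zeta,r)\ne(0,0)$. Then the only bounded solution $v:[0,\infty)\to\mathbb{C}$ of the fourth-order ODE $v''''(t)-2|\zeta|^2 v''(t)+(|\zeta|^4+re^{i\vartheta})v(t)=0$ with initial conditions $v(0)=v'(0)=0$ is $v\equiv0$. -/

import Mathlib

open Set Complex Filter
open Set Complex Filter

noncomputable def cE (l : ℂ) (t : ℝ) : ℂ := Complex.exp (l * t)

lemma cE_hasDeriv (l : ℂ) (t : ℝ) : HasDerivAt (cE l) (l * cE l t) t := by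
  have h : HasDerivAt (fun z : ℂ => Complex.exp (l * z)) (l * Complex.exp (l * t)) (t : ℂ) := by
    exact ((Complex.hasDerivAt_exp (l * t)).comp (t:ℂ) ((hasDerivAt_id (t:ℂ)).const_mul l)).congr_deriv (by ring)
  exact h.comp_ofReal

lemma cE_mul (a b : ℂ) (t : ℝ) : cE a t * cE b t = cE (a+b) t := by
  rw [cE, cE, cE, ← Complex.exp_add, add_mul]

lemma cE_zero (t : ℝ) : cE 0 t = 1 := by simp [cE]

lemma cE_at0 (l : ℂ) : cE l 0 = 1 := by simp [cE]

lemma cE_ne (l : ℂ) (t : ℝ) : cE l t ≠ 0 := Complex.exp_ne_zero _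

lemma cE_congr {a b : ℂ} (h : a = b) (t : ℝ) : cE a t = cE b t := by rw [h]

lemma norm_cE (l : ℂ) (t : ℝ) : ‖cE l t‖ = Real.exp (l.re * t) := by
  rw [cE, Complex.norm_exp]
  norm_num [Complex.mul_re]

lemma const_of_deriv0 {f : ℝ → ℂ} (hf : ∀ t ∈ Ici (0:ℝ), HasDerivAt f 0 t) {t : ℝ} (ht : 0 ≤ t) :
    f t = f 0 := by
  have hc : ContinuousOn f (Icc 0 t) := fun x hx =>
    ((hf x hx.1).continuousAt).continuousWithinAt
  exact constant_of_has_deriv_right_zero hc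
    (fun x hx => ((hf x hx.1).hasDerivWithinAt)) t (by simp [ht])

noncomputable def csqrt (z : ℂ) : ℂ := z ^ (2⁻¹ : ℂ)

lemma csqrt_sq (z : ℂ) : csqrt z ^ 2 = z := by
  have := Complex.cpow_nat_inv_pow z (two_ne_zero (α := ℕ))
  rw [csqrt]
  convert this using 2
  norm_num

lemma csqrt_re_pos {z : ℂ} (h : z.im ≠ 0 ∨ 0 < z.re) : 0 < (csqrt z).re := by
  have hz : z ≠ 0 := by
    rcases h with h | h
    · exact fun hz => h (by simp [hz])
    · exact fun hz => by simp [hz] at h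
  have ha : Complex.arg z ≠ Real.pi := by
    intro hπ
    rw [Complex.arg_eq_pi_iff] at hπ
    rcases h with h | h
    · exact h hπ.2
    · linarith [hπ.1]
  rw [csqrt, Complex.cpow_def_of_ne_zero hz, Complex.exp_re]
  apply mul_pos (Real.exp_pos _)
  have h1 : (Complex.log z * 2⁻¹).im = Complex.arg z / 2 := by
    simp [Complex.mul_im, Complex.log_im]
    ring
  rw [h1]
  apply Real.cos_pos_of_mem_Ioo
  constructor
  · have := Complex.neg_pi_lt_arg z; linarith
  · have h2 := Complex.arg_le_pi z
    rcases lt_or_eq_of_le h2 with h3 | h3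
    · linarith
    · exact absurd h3 ha

lemma tendsto_K_exp (K ρ : ℝ) (hρ : 0 < ρ) :
    Tendsto (fun n : ℕ => K * Real.exp (-(ρ * n))) atTop (nhds 0) := by
  have h1 : Tendsto (fun n : ℕ => ρ * (n:ℝ)) atTop atTop :=
    Tendsto.const_mul_atTop hρ tendsto_natCast_atTop_atTop
  have h2 : Tendsto (fun n : ℕ => Real.exp (-(ρ * n))) atTop (nhds 0) :=
    Real.tendsto_exp_neg_atTop_nhds_zero.comp h1
  simpa using h2.const_mul K

lemma div_exp_bound {E K x : ℝ} (h : E * Real.exp x ≤ K) : E ≤ K * Real.exp (-x) := by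
  calc E = E * Real.exp x * Real.exp (-x) := by rw [mul_assoc, ← Real.exp_add]; simp
  _ ≤ K * Real.exp (-x) := mul_le_mul_of_nonneg_right h (Real.exp_pos _).le


lemma le_zero_of_tendsto {A : ℝ} {f : ℕ → ℝ} (hf : Tendsto f atTop (nhds 0))
    (h : ∀ n, A ≤ f n) : A ≤ 0 := ge_of_tendsto' hf h

lemma single_zero {μ : ℂ} (hμ : 0 < μ.re) {A : ℂ} {K : ℝ}
    (h : ∀ t : ℝ, 0 ≤ t → ‖A * cE μ t‖ ≤ K) : A = 0 := by
  have key : ∀ n : ℕ, ‖A‖ ≤ K * Real.exp (-(μ.re * n)) := by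
    intro n
    apply div_exp_bound
    have h1 := h n (Nat.cast_nonneg n)
    rwa [norm_mul, norm_cE] at h1
  exact norm_le_zero_iff.mp (le_zero_of_tendsto (tendsto_K_exp K μ.re hμ) key)

lemma pair_zero_aux1 {μ ν : ℂ} (hν : 0 < ν.re) (hlt : ν.re < μ.re) {A C : ℂ} {K : ℝ}
    (h : ∀ t : ℝ, 0 ≤ t → ‖A * cE μ t + C * cE ν t‖ ≤ K) : A = 0 ∧ C = 0 := by
  have hμ : 0 < μ.re := hν.trans hlt
  have hA : A = 0 := by
    have key : ∀ n : ℕ, ‖A‖ ≤ K * Real.exp (-(μ.re*n)) + ‖C‖ * Real.exp (-((μ.re-ν.re)*n)) := by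
      intro n
      have h1 : ‖A * cE μ (n:ℝ)‖ ≤ K + ‖C * cE ν (n:ℝ)‖ := by
        calc ‖A * cE μ (n:ℝ)‖ = ‖(A * cE μ (n:ℝ) + C * cE ν (n:ℝ)) - C * cE ν (n:ℝ)‖ := by ring_nf
        _ ≤ ‖A * cE μ (n:ℝ) + C * cE ν (n:ℝ)‖ + ‖C * cE ν (n:ℝ)‖ := norm_sub_le _ _
        _ ≤ K + ‖C * cE ν (n:ℝ)‖ := by linarith [h n (Nat.cast_nonneg n)]
      rw [norm_mul, norm_mul, norm_cE, norm_cE] at h1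
      have h2 := div_exp_bound h1
      calc ‖A‖ ≤ (K + ‖C‖ * Real.exp (ν.re * n)) * Real.exp (-(μ.re * n)) := h2
      _ = K * Real.exp (-(μ.re*n)) + ‖C‖ * Real.exp (-((μ.re-ν.re)*n)) := by
          rw [add_mul, mul_assoc, ← Real.exp_add]
          congr 2
          ring
    have h3 : Tendsto (fun n : ℕ => K * Real.exp (-(μ.re*n)) + ‖C‖ * Real.exp (-((μ.re-ν.re)*n)))
        atTop (nhds 0) := by
      simpa using (tendsto_K_exp K μ.re hμ).add (tendsto_K_exp ‖C‖ (μ.re-ν.re) (by linarith))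
    exact norm_le_zero_iff.mp (le_zero_of_tendsto h3 key)
  have hC : C = 0 := by
    apply single_zero hν (K := K)
    intro t ht
    have := h t ht
    simpa [hA] using this
  exact ⟨hA, hC⟩

lemma pair_zero_aux2 {μ ν : ℂ} (hν : 0 < ν.re) (hre : μ.re = ν.re) (him : ν.im < μ.im)
    {A C : ℂ} {K : ℝ} (h : ∀ t : ℝ, 0 ≤ t → ‖A * cE μ t + C * cE ν t‖ ≤ K) : A = 0 ∧ C = 0 := by
  set d : ℝ := μ.im - ν.im with hd
  have hdpos : 0 < d := by simp [hd]; linarith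
  have hd0 : d ≠ 0 := ne_of_gt hdpos
  have hμν : μ - ν = (d:ℂ) * I := by
    apply Complex.ext <;> simp [hd, hre]
  have hfact : ∀ t : ℝ, A * cE μ t + C * cE ν t = (A * cE (μ - ν) t + C) * cE ν t := by
    intro t
    rw [add_mul, mul_assoc, cE_mul, cE_congr (show μ - ν + ν = μ by ring) t]
  have hbound : ∀ t : ℝ, 0 ≤ t → ‖A * cE (μ - ν) t + C‖ ≤ K * Real.exp (-(ν.re * t)) := by
    intro t ht
    apply div_exp_bound
    have h1 := h t ht
    rw [hfact, norm_mul, norm_cE] at h1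
    exact h1
  have hπ := Real.pi_pos
  -- step 1 : C = -A
  have hAC : C = -A := by
    have key : ∀ n : ℕ, ‖A + C‖ ≤ K * Real.exp (-((2*Real.pi*ν.re/d) * n)) := by
      intro n
      have htn : (0:ℝ) ≤ 2*Real.pi*n/d := by positivity
      have hE : cE (μ - ν) (2*Real.pi*n/d) = 1 := by
        rw [hμν, cE]
        have : (d:ℂ) * I * ((2*Real.pi*n/d : ℝ) : ℂ) = (n:ℤ) * (2 * Real.pi * I) := by
          have hd0 : (d:ℂ) ≠ 0 := by exact_mod_cast hdpos.ne'
          push_cast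
          field_simp
        rw [this, Complex.exp_int_mul_two_pi_mul_I]
      have h1 := hbound _ htn
      rw [hE, mul_one] at h1
      have hexp1 : ν.re * (2*Real.pi*n/d) = (2*Real.pi*ν.re/d) * n := by
        field_simp
      calc ‖A + C‖ ≤ K * Real.exp (-(ν.re * (2*Real.pi*n/d))) := h1
      _ = K * Real.exp (-((2*Real.pi*ν.re/d) * n)) := by rw [hexp1]
    have h4 : A + C = 0 :=
      norm_le_zero_iff.mp (le_zero_of_tendsto (tendsto_K_exp K _ (by positivity)) key)
    linear_combination h4
  -- step 2 : A = 0
  have hA : A = 0 := by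
    have key : ∀ n : ℕ, 2 * ‖A‖ ≤ (K * Real.exp (-(Real.pi*ν.re/d))) * Real.exp (-((2*Real.pi*ν.re/d) * n)) := by
      intro n
      have htn : (0:ℝ) ≤ (2*n+1)*Real.pi/d := by positivity
      have hE : cE (μ - ν) ((2*n+1)*Real.pi/d) = -1 := by
        rw [hμν, cE]
        have heq : (d:ℂ) * I * (((2*n+1)*Real.pi/d : ℝ) : ℂ) = (n:ℤ) * (2 * Real.pi * I) + Real.pi * I := by
          have hd0 : (d:ℂ) ≠ 0 := by exact_mod_cast hdpos.ne'
          push_cast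
          field_simp
        rw [heq, Complex.exp_add, Complex.exp_int_mul_two_pi_mul_I, Complex.exp_pi_mul_I, one_mul]
      have h1 := hbound _ htn
      rw [hE] at h1
      have h2 : A * (-1) + C = -(2*A) := by rw [hAC]; ring
      rw [h2] at h1
      have h3 : ‖-(2*A)‖ = 2 * ‖A‖ := by
        rw [norm_neg, norm_mul]
        norm_num
      rw [h3] at h1
      have hexp2 : ν.re * ((2*n+1)*Real.pi/d) = Real.pi*ν.re/d + (2*Real.pi*ν.re/d) * n := by
        field_simp
        ring
      calc 2*‖A‖ ≤ K * Real.exp (-(ν.re * ((2*n+1)*Real.pi/d))) := h1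
      _ = (K * Real.exp (-(Real.pi*ν.re/d))) * Real.exp (-((2*Real.pi*ν.re/d) * n)) := by
          rw [mul_assoc, ← Real.exp_add]
          congr 2
          linarith
    have h5 := le_zero_of_tendsto (tendsto_K_exp _ _ (by positivity)) key
    have h6 : ‖A‖ ≤ 0 := by linarith [norm_nonneg A]
    exact norm_le_zero_iff.mp h6
  exact ⟨hA, by rw [hAC, hA, neg_zero]⟩

lemma pair_zero {μ ν : ℂ} (hμ : 0 < μ.re) (hν : 0 < ν.re) (hne : μ ≠ ν) {A C : ℂ} {K : ℝ}
    (h : ∀ t : ℝ, 0 ≤ t → ‖A * cE μ t + C * cE ν t‖ ≤ K) : A = 0 ∧ C = 0 := by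
  have hsymm : ∀ t : ℝ, 0 ≤ t → ‖C * cE ν t + A * cE μ t‖ ≤ K := by
    intro t ht; rw [add_comm]; exact h t ht
  rcases lt_trichotomy μ.re ν.re with hlt | heq | hgt
  · have := pair_zero_aux1 hμ hlt hsymm
    exact ⟨this.2, this.1⟩
  · rcases lt_trichotomy μ.im ν.im with h1 | h2 | h3
    · have := pair_zero_aux2 hμ heq.symm h1 hsymm
      exact ⟨this.2, this.1⟩
    · exact absurd (Complex.ext heq h2) hne
    · exact pair_zero_aux2 hν heq h3 h
  · exact pair_zero_aux1 hν hgt h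

lemma deg_zero {m : ℂ} (hm : 0 < m.re) {A B : ℂ} {K : ℝ}
    (h : ∀ t : ℝ, 0 ≤ t → ‖(A + B * (t:ℂ)) * cE m t‖ ≤ K) : A = 0 ∧ B = 0 := by
  have key : ∀ n : ℕ, ‖A + B * (n:ℂ)‖ ≤ K * Real.exp (-(m.re * n)) := by
    intro n
    apply div_exp_bound
    have h1 := h n (Nat.cast_nonneg n)
    rw [norm_mul, norm_cE] at h1
    convert h1 using 4
    simp
  have hB : B = 0 := by
    have key2 : ∀ n : ℕ, ‖B‖ ≤ (K * Real.exp (-m.re)) * Real.exp (-(m.re * n)) + K * Real.exp (-(m.re * n)) := by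
      intro n
      have h1 : ‖B‖ ≤ ‖A + B * ((n+1:ℕ):ℂ)‖ + ‖A + B * (n:ℂ)‖ := by
        calc ‖B‖ = ‖(A + B * ((n+1:ℕ):ℂ)) - (A + B * (n:ℂ))‖ := by
              congr 1
              push_cast
              ring
        _ ≤ _ := norm_sub_le _ _
      have h2 := key (n+1)
      have h3 : K * Real.exp (-(m.re * (n+1:ℕ))) = (K * Real.exp (-m.re)) * Real.exp (-(m.re * n)) := by
        rw [mul_assoc, ← Real.exp_add]
        congr 2
        push_cast
        ring
      rw [h3] at h2
      linarith [key n]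
    have h4 : Tendsto (fun n : ℕ => (K * Real.exp (-m.re)) * Real.exp (-(m.re * n)) + K * Real.exp (-(m.re * n))) atTop (nhds 0) := by
      simpa using (tendsto_K_exp _ m.re hm).add (tendsto_K_exp K m.re hm)
    exact norm_le_zero_iff.mp (le_zero_of_tendsto h4 key2)
  have hA : A = 0 := by
    have key2 : ∀ n : ℕ, ‖A‖ ≤ K * Real.exp (-(m.re * n)) := by
      intro n
      have := key n
      rwa [hB, zero_mul, add_zero] at this
    exact norm_le_zero_iff.mp (le_zero_of_tendsto (tendsto_K_exp K m.re hm) key2)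
  exact ⟨hA, hB⟩


lemma mul_exp_neg_le {ρ : ℝ} (hρ : 0 < ρ) {t : ℝ} (ht : 0 ≤ t) :
    t * Real.exp (-(ρ * t)) ≤ 1/ρ := by
  have h1 : ρ * t ≤ Real.exp (ρ * t) := by linarith [Real.add_one_le_exp (ρ * t)]
  have h3 : Real.exp (ρ*t) * (Real.exp (ρ*t))⁻¹ = 1 := mul_inv_cancel₀ (ne_of_gt (Real.exp_pos _))
  have h4 : (ρ*t) * (Real.exp (ρ*t))⁻¹ ≤ Real.exp (ρ*t) * (Real.exp (ρ*t))⁻¹ :=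
    mul_le_mul_of_nonneg_right h1 (inv_nonneg.mpr (Real.exp_pos _).le)
  rw [h3] at h4
  rw [Real.exp_neg]
  rw [le_div_iff₀ hρ]
  calc t * (Real.exp (ρ*t))⁻¹ * ρ = (ρ*t) * (Real.exp (ρ*t))⁻¹ := by ring
  _ ≤ 1 := h4


set_option maxHeartbeats 2000000 in
theorem stmt5 (ζ : EuclideanSpace ℝ (Fin 2)) (r ϑ : ℝ) (hr : 0 ≤ r)
    (hϑ : ϑ ∈ Icc (-(Real.pi / 2)) (Real.pi / 2))
    (hnz : ¬(ζ = 0 ∧ r = 0))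
    (v : ℝ → ℂ) (hv : ContDiff ℝ 4 v)
    (hode : ∀ t : ℝ, 0 ≤ t →
      iteratedDeriv 4 v t - 2 * (‖ζ‖ ^ 2 : ℝ) * iteratedDeriv 2 v t
        + (((‖ζ‖ ^ 4 : ℝ) : ℂ) + (r : ℂ) * Complex.exp (ϑ * Complex.I)) * v t = 0)
    (hbdd : ∃ K : ℝ, ∀ t : ℝ, 0 ≤ t → ‖v t‖ ≤ K)
    (h0 : v 0 = 0) (h0' : deriv v 0 = 0) :
    ∀ t : ℝ, 0 ≤ t → v t = 0 := by
  obtain ⟨K, hK⟩ := hbdd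
  have hπ := Real.pi_pos
  -- complex constants
  set a : ℂ := ((‖ζ‖^2 : ℝ) : ℂ) with ha
  set c : ℂ := (r:ℂ) * Complex.exp ((ϑ:ℂ) * I) with hc
  set s : ℂ := ((Real.sqrt r : ℝ) : ℂ) * Complex.exp ((((ϑ+Real.pi)/2 : ℝ) : ℂ) * I) with hs
  have hsq2 : s^2 = -c := by
    rw [hs, hc]
    have h1 : (((Real.sqrt r : ℝ)) : ℂ)^2 = (r:ℂ) := by
      norm_cast
      exact Real.sq_sqrt hr
    rw [mul_pow, h1, sq, ← Complex.exp_add]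
    have h2 : ((((ϑ+Real.pi)/2 : ℝ)) : ℂ) * I + ((((ϑ+Real.pi)/2 : ℝ)) : ℂ) * I
        = (ϑ:ℂ) * I + (Real.pi:ℂ) * I := by push_cast; ring
    rw [h2, Complex.exp_add, Complex.exp_pi_mul_I]
    ring
  have hsinpos : 0 < Real.sin ((ϑ+Real.pi)/2) :=
    Real.sin_pos_of_pos_of_lt_pi (by linarith [hϑ.1]) (by linarith [hϑ.2])
  have hsim : s.im = Real.sqrt r * Real.sin ((ϑ+Real.pi)/2) := by
    rw [hs, Complex.mul_im, Complex.ofReal_re, Complex.ofReal_im,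
      Complex.exp_ofReal_mul_I_im]
    ring
  have haim : a.im = 0 := by rw [ha]; exact Complex.ofReal_im _
  set zp : ℂ := a + s with hzp
  set zm : ℂ := a - s with hzm
  have hzsum : zp + zm = 2*a := by rw [hzp, hzm]; ring
  have hzprod : zp * zm = a^2 + c := by rw [hzp, hzm]; linear_combination -hsq2
  set Mp : ℂ := csqrt zp with hMp
  set Mm : ℂ := csqrt zm with hMm
  have hMp2 : Mp^2 = zp := csqrt_sq zp
  have hMm2 : Mm^2 = zm := csqrt_sq zm
  have hcase : (0 < r ∧ 0 < s.im) ∨ (r = 0 ∧ s = 0 ∧ 0 < a.re) := by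
    rcases lt_or_eq_of_le hr with hrpos | hr0
    · left
      exact ⟨hrpos, by rw [hsim]; exact mul_pos (Real.sqrt_pos.mpr hrpos) hsinpos⟩
    · right
      have hζ : ζ ≠ 0 := fun h => hnz ⟨h, hr0.symm⟩
      have hζ2 : 0 < ‖ζ‖ := norm_pos_iff.mpr hζ
      refine ⟨hr0.symm, by rw [hs, ← hr0]; simp, ?_⟩
      rw [ha, Complex.ofReal_re]
      exact pow_pos hζ2 2
  have hMppos : 0 < Mp.re := by
    rw [hMp]; apply csqrt_re_pos
    rcases hcase with ⟨_, hsimpos⟩ | ⟨_, hs0, hapos⟩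
    · left; rw [hzp, Complex.add_im, haim, zero_add]; exact ne_of_gt hsimpos
    · right; rw [hzp, hs0, add_zero]; exact hapos
  have hMmpos : 0 < Mm.re := by
    rw [hMm]; apply csqrt_re_pos
    rcases hcase with ⟨_, hsimpos⟩ | ⟨_, hs0, hapos⟩
    · left; rw [hzm, Complex.sub_im, haim, zero_sub]
      exact neg_ne_zero.mpr (ne_of_gt hsimpos)
    · right; rw [hzm, hs0, sub_zero]; exact hapos
  have hMpne : Mp ≠ 0 := by intro h; rw [h] at hMppos; simp at hMppos
  have hMmne : Mm ≠ 0 := by intro h; rw [h] at hMmpos; simp at hMmpos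
  have hsumne : Mp + Mm ≠ 0 := by
    intro h
    have h2 : (Mp + Mm).re = 0 := by rw [h]; simp
    rw [Complex.add_re] at h2; linarith
  -- derivative setup
  have hder : ∀ k : ℕ, k < 4 → ∀ t : ℝ, HasDerivAt (iteratedDeriv k v) (iteratedDeriv (k+1) v t) t := by
    intro k hk t
    rw [iteratedDeriv_succ]
    exact ((hv.differentiable_iteratedDeriv k (by exact_mod_cast hk)) t).hasDerivAt
  set w1 : ℝ → ℂ := iteratedDeriv 1 v with hw1def
  set w2 : ℝ → ℂ := iteratedDeriv 2 v with hw2def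
  set w3 : ℝ → ℂ := iteratedDeriv 3 v with hw3def
  have hd0 : ∀ t, HasDerivAt v (w1 t) t := by
    intro t
    have h1 := hder 0 (by norm_num) t
    rwa [iteratedDeriv_zero, ← hw1def] at h1
  have hd1 : ∀ t, HasDerivAt w1 (w2 t) t := fun t => hder 1 (by norm_num) t
  have hd2 : ∀ t, HasDerivAt w2 (w3 t) t := fun t => hder 2 (by norm_num) t
  have hd3 : ∀ t, HasDerivAt w3 (iteratedDeriv 4 v t) t := fun t => hder 3 (by norm_num) t
  have hw10 : w1 0 = 0 := by rw [hw1def, iteratedDeriv_one]; exact h0'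
  -- the ODE in normalized form
  have hode2 : ∀ t : ℝ, 0 ≤ t → iteratedDeriv 4 v t = 2*a*w2 t - (zp*zm)*v t := by
    intro t ht
    have h1 := hode t ht
    have h2 : ((‖ζ‖^4:ℝ):ℂ) = a^2 := by rw [ha]; push_cast; ring
    rw [hzprod]
    linear_combination h1 - (v t) * h2
  -- the function g = w2 - zm v and its derivative g' = w3 - zm w1
  set g : ℝ → ℂ := fun t => w2 t - zm * v t with hgdef
  set g' : ℝ → ℂ := fun t => w3 t - zm * w1 t with hg'def
  have hgd : ∀ t, HasDerivAt g (g' t) t := fun t => (hd2 t).sub ((hd0 t).const_mul zm)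
  have hgd' : ∀ t, 0 ≤ t → HasDerivAt g' (zp * g t) t := by
    intro t ht
    have H := (hd3 t).sub ((hd1 t).const_mul zm)
    refine H.congr_deriv (Eq.symm ?_)
    rw [hode2 t ht]
    simp only [hgdef]
    linear_combination (w2 t) * hzsum
  -- q = g' - Mp g satisfies q' = -Mp q
  set q : ℝ → ℂ := fun t => g' t - Mp * g t with hqdef
  have hqd : ∀ t, 0 ≤ t → HasDerivAt q (-Mp * q t) t := by
    intro t ht
    have H := (hgd' t ht).sub ((hgd t).const_mul Mp)
    refine H.congr_deriv (Eq.symm ?_)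
    simp only [hqdef]
    linear_combination (g t) * hMp2
  have hqrep : ∀ t : ℝ, 0 ≤ t → q t = q 0 * cE (-Mp) t := by
    intro t ht
    have hconst : ∀ u, 0 ≤ u → HasDerivAt (fun t => q t * cE Mp t) 0 u := by
      intro u hu
      have H := (hqd u hu).mul (cE_hasDeriv Mp u)
      refine H.congr_deriv (Eq.symm ?_)
      ring
    have h1 := const_of_deriv0 hconst ht
    rw [cE_at0, mul_one] at h1
    calc q t = (q t * cE Mp t) * cE (-Mp) t := by
          rw [mul_assoc, cE_mul, cE_congr (show Mp + -Mp = 0 by ring), cE_zero, mul_one]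
    _ = q 0 * cE (-Mp) t := by rw [h1]
  -- step 2: g t = α0 cE Mp t - β cE (-Mp) t
  obtain ⟨β, hβ⟩ : ∃ x : ℂ, q 0 = 2*Mp*x := ⟨q 0 / (2*Mp), by field_simp; try ring⟩
  set φ2 : ℝ → ℂ := fun t => g t * cE (-Mp) t + β * cE (-(2*Mp)) t with hφ2def
  have hφ2' : ∀ t, 0 ≤ t → HasDerivAt φ2 0 t := by
    intro t ht
    have H := ((hgd t).mul (cE_hasDeriv (-Mp) t)).add ((cE_hasDeriv (-(2*Mp)) t).const_mul β)
    refine H.congr_deriv (Eq.symm ?_)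
    have e1 := hqrep t ht
    simp only [hqdef] at e1
    have e2 : cE (-Mp) t * cE (-Mp) t = cE (-(2*Mp)) t := by
      rw [cE_mul, cE_congr (show -Mp + -Mp = -(2*Mp) by ring)]
    linear_combination (-(cE (-Mp) t)) * e1 - (q 0) * e2 - (cE (-(2*Mp)) t) * hβ
  obtain ⟨α0, hα0def⟩ : ∃ x : ℂ, x = φ2 0 := ⟨φ2 0, rfl⟩
  have hgrep : ∀ t : ℝ, 0 ≤ t → g t = α0 * cE Mp t - β * cE (-Mp) t := by
    intro t ht
    have h1 := const_of_deriv0 hφ2' ht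
    rw [← hα0def] at h1
    simp only [hφ2def] at h1
    calc g t = ((g t * cE (-Mp) t + β * cE (-(2*Mp)) t) - β * cE (-(2*Mp)) t) * cE Mp t := by
          rw [add_sub_cancel_right, mul_assoc, cE_mul,
            cE_congr (show -Mp + Mp = 0 by ring), cE_zero, mul_one]
    _ = (α0 - β * cE (-(2*Mp)) t) * cE Mp t := by rw [h1]
    _ = α0 * cE Mp t - β * (cE (-(2*Mp)) t * cE Mp t) := by ring
    _ = α0 * cE Mp t - β * cE (-Mp) t := by
          rw [cE_mul, cE_congr (show -(2*Mp) + Mp = -Mp by ring)]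
  -- the function k = w1 - Mm v
  set k : ℝ → ℂ := fun t => w1 t - Mm * v t with hkdef
  have hkd : ∀ t, HasDerivAt k (w2 t - Mm * w1 t) t := fun t => (hd1 t).sub ((hd0 t).const_mul Mm)
  have hk0 : k 0 = 0 := by simp only [hkdef]; rw [hw10, h0]; ring
  rcases hcase with ⟨hrpos, hsimpos⟩ | ⟨hr0, hs0, hapos⟩
  · -- nondegenerate case : Mp ≠ Mm
    have hMpMm : Mp ≠ Mm := by
      intro h
      have h2 : zp = zm := by rw [← hMp2, ← hMm2, h]
      have h3 : s = 0 := by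
        rw [hzp, hzm] at h2
        linear_combination h2 / 2
      rw [h3] at hsimpos
      simp at hsimpos
    have hdiffne : Mm - Mp ≠ 0 := fun h => hMpMm (by linear_combination -h)
    have hdiffne' : Mp - Mm ≠ 0 := fun h => hMpMm (by linear_combination h)
    -- step 3
    obtain ⟨α1, hα1⟩ : ∃ x : ℂ, α0 = (Mp + Mm) * x := ⟨α0 / (Mp + Mm), by field_simp; try ring⟩
    obtain ⟨β1, hβ1⟩ : ∃ x : ℂ, -β = (Mm - Mp) * x := ⟨(-β) / (Mm - Mp), by field_simp; try ring⟩
    set φ3 : ℝ → ℂ := fun t => k t * cE Mm t - α1 * cE (Mp+Mm) t - β1 * cE (Mm-Mp) t with hφ3def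
    have hφ3' : ∀ t, 0 ≤ t → HasDerivAt φ3 0 t := by
      intro t ht
      have H := (((hkd t).mul (cE_hasDeriv Mm t)).sub ((cE_hasDeriv (Mp+Mm) t).const_mul α1)).sub
        ((cE_hasDeriv (Mm-Mp) t).const_mul β1)
      refine H.congr_deriv (Eq.symm ?_)
      have e1 := hgrep t ht
      simp only [hgdef] at e1
      have e2 : cE Mp t * cE Mm t = cE (Mp+Mm) t := cE_mul Mp Mm t
      have e3 : cE (-Mp) t * cE Mm t = cE (Mm-Mp) t := by
        rw [cE_mul, cE_congr (show -Mp + Mm = Mm - Mp by ring)]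
      simp only [hkdef]
      linear_combination (-(cE Mm t)) * e1 - (v t * cE Mm t) * hMm2 - α0 * e2 + β * e3
        + (cE (Mp+Mm) t) * hα1 - (cE (Mm-Mp) t) * hβ1
        + 2*(v t * cE Mm t) * hMm2 - 2*(cE (Mp+Mm) t) * hα1
    obtain ⟨γ, hγdef⟩ : ∃ x : ℂ, x = φ3 0 := ⟨φ3 0, rfl⟩
    have hkrep : ∀ t : ℝ, 0 ≤ t → k t = γ * cE (-Mm) t + α1 * cE Mp t + β1 * cE (-Mp) t := by
      intro t ht
      have h1 := const_of_deriv0 hφ3' ht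
      rw [← hγdef] at h1
      simp only [hφ3def] at h1
      calc k t = ((k t * cE Mm t - α1 * cE (Mp+Mm) t - β1 * cE (Mm-Mp) t)
            + α1 * cE (Mp+Mm) t + β1 * cE (Mm-Mp) t) * cE (-Mm) t := by
            rw [show ∀ x b c : ℂ, (x - b - c) + b + c = x from fun x b c => by ring]
            rw [mul_assoc, cE_mul, cE_congr (show Mm + -Mm = 0 by ring), cE_zero, mul_one]
      _ = (γ + α1 * cE (Mp+Mm) t + β1 * cE (Mm-Mp) t) * cE (-Mm) t := by rw [h1]
      _ = γ * cE (-Mm) t + α1 * (cE (Mp+Mm) t * cE (-Mm) t) + β1 * (cE (Mm-Mp) t * cE (-Mm) t) := by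
            ring
      _ = γ * cE (-Mm) t + α1 * cE Mp t + β1 * cE (-Mp) t := by
            rw [cE_mul, cE_mul, cE_congr (show Mp + Mm + -Mm = Mp by ring),
              cE_congr (show Mm - Mp + -Mm = -Mp by ring)]
    -- step 4
    obtain ⟨δ1, hδ1⟩ : ∃ x : ℂ, γ = 2*Mm*x := ⟨γ / (2*Mm), by field_simp; try ring⟩
    obtain ⟨δ2, hδ2⟩ : ∃ x : ℂ, α1 = (Mp - Mm) * x := ⟨α1 / (Mp - Mm), by field_simp; try ring⟩
    obtain ⟨δ3, hδ3⟩ : ∃ x : ℂ, β1 = (Mp + Mm) * x := ⟨β1 / (Mp + Mm), by field_simp; try ring⟩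
    set φ4 : ℝ → ℂ := fun t => v t * cE (-Mm) t + δ1 * cE (-(2*Mm)) t - δ2 * cE (Mp-Mm) t
      + δ3 * cE (-(Mp+Mm)) t with hφ4def
    have hφ4' : ∀ t, 0 ≤ t → HasDerivAt φ4 0 t := by
      intro t ht
      have H := ((((hd0 t).mul (cE_hasDeriv (-Mm) t)).add
        ((cE_hasDeriv (-(2*Mm)) t).const_mul δ1)).sub
        ((cE_hasDeriv (Mp-Mm) t).const_mul δ2)).add
        ((cE_hasDeriv (-(Mp+Mm)) t).const_mul δ3)
      refine H.congr_deriv (Eq.symm ?_)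
      have e1 := hkrep t ht
      simp only [hkdef] at e1
      have e2 : cE (-Mm) t * cE (-Mm) t = cE (-(2*Mm)) t := by
        rw [cE_mul, cE_congr (show -Mm + -Mm = -(2*Mm) by ring)]
      have e3 : cE Mp t * cE (-Mm) t = cE (Mp-Mm) t := by
        rw [cE_mul, cE_congr (show Mp + -Mm = Mp - Mm by ring)]
      have e4 : cE (-Mp) t * cE (-Mm) t = cE (-(Mp+Mm)) t := by
        rw [cE_mul, cE_congr (show -Mp + -Mm = -(Mp+Mm) by ring)]
      linear_combination (-(cE (-Mm) t)) * e1 - γ * e2 - α1 * e3 - β1 * e4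
        + (cE (-(2*Mm)) t) * hδ1 + (cE (Mp-Mm) t) * hδ2 + (cE (-(Mp+Mm)) t) * hδ3
        - 2*(cE (-(2*Mm)) t) * hδ1 - 2*(cE (Mp-Mm) t) * hδ2 - 2*(cE (-(Mp+Mm)) t) * hδ3
    obtain ⟨C0, hC0def⟩ : ∃ x : ℂ, x = φ4 0 := ⟨φ4 0, rfl⟩
    have hvrep : ∀ t : ℝ, 0 ≤ t →
        v t = δ2 * cE Mp t - δ3 * cE (-Mp) t + C0 * cE Mm t - δ1 * cE (-Mm) t := by
      intro t ht
      have h1 := const_of_deriv0 hφ4' ht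
      rw [← hC0def] at h1
      simp only [hφ4def] at h1
      calc v t = ((v t * cE (-Mm) t + δ1 * cE (-(2*Mm)) t - δ2 * cE (Mp-Mm) t
            + δ3 * cE (-(Mp+Mm)) t) - δ1 * cE (-(2*Mm)) t + δ2 * cE (Mp-Mm) t
            - δ3 * cE (-(Mp+Mm)) t) * cE Mm t := by
            rw [show ∀ x b c d : ℂ, (x + b - c + d) - b + c - d = x from fun x b c d => by ring]
            rw [mul_assoc, cE_mul, cE_congr (show -Mm + Mm = 0 by ring), cE_zero, mul_one]
      _ = (C0 - δ1 * cE (-(2*Mm)) t + δ2 * cE (Mp-Mm) t - δ3 * cE (-(Mp+Mm)) t) * cE Mm t := by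
            rw [h1]
      _ = C0 * cE Mm t - δ1 * (cE (-(2*Mm)) t * cE Mm t) + δ2 * (cE (Mp-Mm) t * cE Mm t)
            - δ3 * (cE (-(Mp+Mm)) t * cE Mm t) := by ring
      _ = δ2 * cE Mp t - δ3 * cE (-Mp) t + C0 * cE Mm t - δ1 * cE (-Mm) t := by
            rw [cE_mul, cE_mul, cE_mul, cE_congr (show -(2*Mm) + Mm = -Mm by ring),
              cE_congr (show Mp - Mm + Mm = Mp by ring),
              cE_congr (show -(Mp+Mm) + Mm = -Mp by ring)]
            ring
    -- boundedness kills the growing modes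
    have hbound : ∀ t : ℝ, 0 ≤ t → ‖δ2 * cE Mp t + C0 * cE Mm t‖ ≤ K + ‖δ3‖ + ‖δ1‖ := by
      intro t ht
      have h1 : δ2 * cE Mp t + C0 * cE Mm t = v t + δ3 * cE (-Mp) t + δ1 * cE (-Mm) t := by
        rw [hvrep t ht]; ring
      rw [h1]
      have h2 : ‖δ3 * cE (-Mp) t‖ ≤ ‖δ3‖ := by
        rw [norm_mul, norm_cE]
        have h5 : Real.exp ((-Mp).re * t) ≤ 1 := by
          rw [Real.exp_le_one_iff, Complex.neg_re]
          nlinarith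
        nlinarith [norm_nonneg δ3, Real.exp_pos ((-Mp).re * t)]
      have h3 : ‖δ1 * cE (-Mm) t‖ ≤ ‖δ1‖ := by
        rw [norm_mul, norm_cE]
        have h5 : Real.exp ((-Mm).re * t) ≤ 1 := by
          rw [Real.exp_le_one_iff, Complex.neg_re]
          nlinarith
        nlinarith [norm_nonneg δ1, Real.exp_pos ((-Mm).re * t)]
      calc ‖v t + δ3 * cE (-Mp) t + δ1 * cE (-Mm) t‖
          ≤ ‖v t + δ3 * cE (-Mp) t‖ + ‖δ1 * cE (-Mm) t‖ := norm_add_le _ _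
      _ ≤ ‖v t‖ + ‖δ3 * cE (-Mp) t‖ + ‖δ1 * cE (-Mm) t‖ := by
            linarith [norm_add_le (v t) (δ3 * cE (-Mp) t)]
      _ ≤ K + ‖δ3‖ + ‖δ1‖ := by linarith [hK t ht]
    obtain ⟨hδ2zero, hC0zero⟩ := pair_zero hMppos hMmpos hMpMm hbound
    -- final linear algebra
    have hα1zero : α1 = 0 := by rw [hδ2, hδ2zero, mul_zero]
    have hv0 : (0:ℂ) = δ2 - δ3 + C0 - δ1 := by
      have h6 := hvrep 0 le_rfl
      rw [h0] at h6
      simpa [cE_at0] using h6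
    have hk0' : (0:ℂ) = γ + α1 + β1 := by
      have h6 := hkrep 0 le_rfl
      rw [hk0] at h6
      simpa [cE_at0] using h6
    have hδ1zero : δ1 = 0 := by
      have h1 : γ = -β1 := by linear_combination -hk0' - hα1zero
      have h2 : δ3 = -δ1 := by linear_combination hv0 + hδ2zero + hC0zero
      have h4 : 2*Mm*δ1 = (Mp+Mm)*δ1 := by
        calc 2*Mm*δ1 = γ := hδ1.symm
        _ = -β1 := h1
        _ = -((Mp+Mm)*δ3) := by rw [hδ3]
        _ = (Mp+Mm)*δ1 := by rw [h2]; ring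
      have h3 : (Mm - Mp) * δ1 = 0 := by linear_combination h4
      exact (mul_eq_zero.mp h3).resolve_left hdiffne
    have hδ3zero : δ3 = 0 := by linear_combination hv0 + hδ2zero + hC0zero - hδ1zero
    intro t ht
    rw [hvrep t ht, hδ2zero, hδ3zero, hC0zero, hδ1zero]
    ring
  · -- degenerate case : Mp = Mm
    have hMM : Mp = Mm := by rw [hMp, hMm, hzp, hzm, hs0]; norm_num
    rw [hMM] at hgrep
    have hid : ∀ t : ℝ, HasDerivAt (fun u : ℝ => (u:ℂ)) 1 t := fun t =>
      (hasDerivAt_id (t:ℂ)).comp_ofReal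
    -- step 3
    obtain ⟨α1, hα1⟩ : ∃ x : ℂ, α0 = 2*Mm*x := ⟨α0 / (2*Mm), by field_simp; try ring⟩
    set φ3 : ℝ → ℂ := fun t => k t * cE Mm t - α1 * cE (2*Mm) t + β * (t:ℂ) with hφ3def
    have hφ3' : ∀ t, 0 ≤ t → HasDerivAt φ3 0 t := by
      intro t ht
      have H := (((hkd t).mul (cE_hasDeriv Mm t)).sub ((cE_hasDeriv (2*Mm) t).const_mul α1)).add
        ((hid t).const_mul β)
      refine H.congr_deriv (Eq.symm ?_)
      have e1 := hgrep t ht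
      simp only [hgdef] at e1
      have e2 : cE Mm t * cE Mm t = cE (2*Mm) t := by
        rw [cE_mul, cE_congr (show Mm + Mm = 2*Mm by ring)]
      simp only [hkdef]
      have e3 : cE Mm t * cE (-Mm) t = 1 := by
        rw [cE_mul, cE_congr (show Mm + -Mm = 0 by ring), cE_zero]
      linear_combination (-(cE Mm t)) * e1 - (v t * cE Mm t) * hMm2 - α0 * e2
        + (cE (2*Mm) t) * hα1 + β * e3
        + 2*(v t * cE Mm t) * hMm2 - 2*(cE (2*Mm) t) * hα1
    obtain ⟨γ, hγdef⟩ : ∃ x : ℂ, x = φ3 0 := ⟨φ3 0, rfl⟩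
    have hkrep : ∀ t : ℝ, 0 ≤ t →
        k t = γ * cE (-Mm) t + α1 * cE Mm t - β * (t:ℂ) * cE (-Mm) t := by
      intro t ht
      have h1 := const_of_deriv0 hφ3' ht
      rw [← hγdef] at h1
      simp only [hφ3def] at h1
      calc k t = ((k t * cE Mm t - α1 * cE (2*Mm) t + β * (t:ℂ))
            + α1 * cE (2*Mm) t - β * (t:ℂ)) * cE (-Mm) t := by
            rw [show ∀ x b c : ℂ, (x - b + c) + b - c = x from fun x b c => by ring]
            rw [mul_assoc, cE_mul, cE_congr (show Mm + -Mm = 0 by ring), cE_zero, mul_one]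
      _ = (γ + α1 * cE (2*Mm) t - β * (t:ℂ)) * cE (-Mm) t := by rw [h1]
      _ = γ * cE (-Mm) t + α1 * (cE (2*Mm) t * cE (-Mm) t) - β * (t:ℂ) * cE (-Mm) t := by ring
      _ = γ * cE (-Mm) t + α1 * cE Mm t - β * (t:ℂ) * cE (-Mm) t := by
            rw [cE_mul, cE_congr (show 2*Mm + -Mm = Mm by ring)]
    -- step 4
    obtain ⟨δ1, hδ1⟩ : ∃ x : ℂ, γ = 2*Mm*x := ⟨γ / (2*Mm), by field_simp; try ring⟩
    obtain ⟨δ4, hδ4⟩ : ∃ x : ℂ, 2*Mm*x = 1 := ⟨1 / (2*Mm), by field_simp⟩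
    obtain ⟨δ5, hδ5⟩ : ∃ x : ℂ, 2*Mm*x = δ4 := ⟨δ4 / (2*Mm), by field_simp; try ring⟩
    set φ4 : ℝ → ℂ := fun t => v t * cE (-Mm) t + δ1 * cE (-(2*Mm)) t - α1 * (t:ℂ)
      - β * ((t:ℂ) * δ4 + δ5) * cE (-(2*Mm)) t with hφ4def
    have hφ4' : ∀ t, 0 ≤ t → HasDerivAt φ4 0 t := by
      intro t ht
      have H := ((((hd0 t).mul (cE_hasDeriv (-Mm) t)).add
        ((cE_hasDeriv (-(2*Mm)) t).const_mul δ1)).sub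
        ((hid t).const_mul α1)).sub
        (((((hid t).mul_const δ4).add_const δ5).const_mul β).mul (cE_hasDeriv (-(2*Mm)) t))
      refine H.congr_deriv (Eq.symm ?_)
      have e1 := hkrep t ht
      simp only [hkdef] at e1
      have e2 : cE (-Mm) t * cE (-Mm) t = cE (-(2*Mm)) t := by
        rw [cE_mul, cE_congr (show -Mm + -Mm = -(2*Mm) by ring)]
      have e3 : cE Mm t * cE (-Mm) t = 1 := by
        rw [cE_mul, cE_congr (show Mm + -Mm = 0 by ring), cE_zero]
      linear_combination (-(cE (-Mm) t)) * e1 - γ * e2 - α1 * e3 + (cE (-(2*Mm)) t) * hδ1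
        + (β * (t:ℂ) * cE (-(2*Mm)) t) * hδ4 + (β * cE (-(2*Mm)) t) * hδ5
        + (β * (t:ℂ)) * e2 - 2*(β*(t:ℂ)*cE (-(2*Mm)) t) * hδ4
        - 2*(cE (-(2*Mm)) t) * hδ1 - 2*(β*cE (-(2*Mm)) t) * hδ5
    obtain ⟨C0, hC0def⟩ : ∃ x : ℂ, x = φ4 0 := ⟨φ4 0, rfl⟩
    have hvrep : ∀ t : ℝ, 0 ≤ t →
        v t = (C0 + α1 * (t:ℂ)) * cE Mm t + (β * ((t:ℂ) * δ4 + δ5) - δ1) * cE (-Mm) t := by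
      intro t ht
      have h1 := const_of_deriv0 hφ4' ht
      rw [← hC0def] at h1
      simp only [hφ4def] at h1
      calc v t = ((v t * cE (-Mm) t + δ1 * cE (-(2*Mm)) t - α1 * (t:ℂ)
            - β * ((t:ℂ) * δ4 + δ5) * cE (-(2*Mm)) t) - δ1 * cE (-(2*Mm)) t + α1 * (t:ℂ)
            + β * ((t:ℂ) * δ4 + δ5) * cE (-(2*Mm)) t) * cE Mm t := by
            rw [show ∀ x b c d : ℂ, (x + b - c - d) - b + c + d = x from fun x b c d => by ring]
            rw [mul_assoc, cE_mul, cE_congr (show -Mm + Mm = 0 by ring), cE_zero, mul_one]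
      _ = (C0 - δ1 * cE (-(2*Mm)) t + α1 * (t:ℂ)
            + β * ((t:ℂ) * δ4 + δ5) * cE (-(2*Mm)) t) * cE Mm t := by rw [h1]
      _ = (C0 + α1 * (t:ℂ)) * cE Mm t
            + (β * ((t:ℂ) * δ4 + δ5) - δ1) * (cE (-(2*Mm)) t * cE Mm t) := by ring
      _ = (C0 + α1 * (t:ℂ)) * cE Mm t + (β * ((t:ℂ) * δ4 + δ5) - δ1) * cE (-Mm) t := by
            rw [cE_mul, cE_congr (show -(2*Mm) + Mm = -Mm by ring)]
    -- boundedness kills the growing modes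
    have hbound : ∀ t : ℝ, 0 ≤ t →
        ‖(C0 + α1 * (t:ℂ)) * cE Mm t‖ ≤ K + ‖β*δ5 - δ1‖ + ‖β*δ4‖ * (1/Mm.re) := by
      intro t ht
      have h1 : (C0 + α1 * (t:ℂ)) * cE Mm t = v t - (β * ((t:ℂ) * δ4 + δ5) - δ1) * cE (-Mm) t := by
        rw [hvrep t ht]; ring
      rw [h1]
      have h2 : ‖(β * ((t:ℂ) * δ4 + δ5) - δ1) * cE (-Mm) t‖
          ≤ ‖β*δ5 - δ1‖ + ‖β*δ4‖ * (1/Mm.re) := by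
        rw [norm_mul, norm_cE]
        have h3 : β * ((t:ℂ) * δ4 + δ5) - δ1 = (β*δ4) * (t:ℂ) + (β*δ5 - δ1) := by ring
        rw [h3]
        have h4 : ‖(β*δ4) * (t:ℂ) + (β*δ5 - δ1)‖ ≤ ‖β*δ4‖ * t + ‖β*δ5 - δ1‖ := by
          calc ‖(β*δ4) * (t:ℂ) + (β*δ5 - δ1)‖ ≤ ‖(β*δ4) * (t:ℂ)‖ + ‖β*δ5 - δ1‖ := norm_add_le _ _
          _ = ‖β*δ4‖ * t + ‖β*δ5 - δ1‖ := by
                rw [norm_mul, Complex.norm_real, Real.norm_eq_abs, _root_.abs_of_nonneg ht]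
        have h5 : Real.exp ((-Mm).re * t) ≤ 1 := by
          rw [Real.exp_le_one_iff, Complex.neg_re]
          nlinarith
        have h6 : t * Real.exp ((-Mm).re * t) ≤ 1/Mm.re := by
          have h7 : (-Mm).re * t = -(Mm.re * t) := by rw [Complex.neg_re]; ring
          rw [h7]
          exact mul_exp_neg_le hMmpos ht
        have h8 : 0 ≤ Real.exp ((-Mm).re * t) := (Real.exp_pos _).le
        calc ‖(β*δ4) * (t:ℂ) + (β*δ5 - δ1)‖ * Real.exp ((-Mm).re * t)
            ≤ (‖β*δ4‖ * t + ‖β*δ5 - δ1‖) * Real.exp ((-Mm).re * t) :=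
              mul_le_mul_of_nonneg_right h4 h8
        _ = ‖β*δ4‖ * (t * Real.exp ((-Mm).re * t)) + ‖β*δ5 - δ1‖ * Real.exp ((-Mm).re * t) := by
              ring
        _ ≤ ‖β*δ4‖ * (1/Mm.re) + ‖β*δ5 - δ1‖ * 1 := by
              have := norm_nonneg (β*δ4)
              have := norm_nonneg (β*δ5 - δ1)
              gcongr
        _ = ‖β*δ5 - δ1‖ + ‖β*δ4‖ * (1/Mm.re) := by ring
      calc ‖v t - (β * ((t:ℂ) * δ4 + δ5) - δ1) * cE (-Mm) t‖
          ≤ ‖v t‖ + ‖(β * ((t:ℂ) * δ4 + δ5) - δ1) * cE (-Mm) t‖ := norm_sub_le _ _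
      _ ≤ K + (‖β*δ5 - δ1‖ + ‖β*δ4‖ * (1/Mm.re)) := by linarith [hK t ht]
      _ = K + ‖β*δ5 - δ1‖ + ‖β*δ4‖ * (1/Mm.re) := by ring
    obtain ⟨hC0zero, hα1zero⟩ := deg_zero hMmpos hbound
    -- final linear algebra
    have hv0 : (0:ℂ) = C0 + (β*δ5 - δ1) := by
      have h6 := hvrep 0 le_rfl
      rw [h0] at h6
      simpa [cE_at0] using h6
    have hk0' : (0:ℂ) = γ + α1 := by
      have h6 := hkrep 0 le_rfl
      rw [hk0] at h6
      simpa [cE_at0] using h6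
    have hγzero : γ = 0 := by linear_combination -hk0' - hα1zero
    have hδ1zero : δ1 = 0 := by
      have h1 : 2*Mm*δ1 = 0 := by rw [← hδ1, hγzero]
      have h2 : (2:ℂ)*Mm ≠ 0 := by
        intro h
        rcases mul_eq_zero.mp h with h | h
        · norm_num at h
        · exact hMmne h
      exact (mul_eq_zero.mp h1).resolve_left h2
    have hβzero : β = 0 := by
      have h1 : β * δ5 = 0 := by linear_combination -hv0 - hC0zero + hδ1zero
      rcases mul_eq_zero.mp h1 with h | h
      · exact h
      · exfalso
        have h2 : (2:ℂ)*Mm*(2*Mm*δ5) = 2*Mm*δ4 := by rw [hδ5]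
        rw [h, hδ4] at h2
        simp at h2
    intro t ht
    rw [hvrep t ht, hC0zero, hα1zero, hβzero, hδ1zero]
    ring
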